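/- Let n ≥ 1, let h : Fin n → ℝ be not identically zero, and let T : Fin n → Fin n → Fin n → ℝ be totally symmetric and satisfy: (a) T(i,i,j) = 0 for all i ≠ j; (b) T(i,j,k) = 0 whenever i, j, k are pairwise distinct; and (c) h(i)·T(s,s,k) = h(s)·T(i,i,k) for all i, s, k. Then there is at most one index i with T(i,i,i) ≠ 0. -/
import Mathlib


open Finset

/-- If `h : Fin n → ℝ` is not identically zero and `T` is a totally symmetric
3-tensor (total symmetry is expressed by invariance under the two
transpositions swapping the first two and the last two indices, which generate
all permutations of the three indices) satisfying
(a) `T(i,i,j) = 0` for all `i ≠ j`,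
(b) `T(i,j,k) = 0` whenever `i, j, k` are pairwise distinct,
(c) `h(i)·T(s,s,k) = h(s)·T(i,i,k)` for all `i, s, k`,
then there is at most one index `i` with `T(i,i,i) ≠ 0`. -/
theorem at_most_one_nonzero_diagonal (n : ℕ) (hn : 1 ≤ n)
    (h : Fin n → ℝ) (hh : h ≠ 0)
    (T : Fin n → Fin n → Fin n → ℝ)
    (hsym₁ : ∀ i j k, T i j k = T j i k)
    (hsym₂ : ∀ i j k, T i j k = T i k j)
    (ha : ∀ i j, i ≠ j → T i i j = 0)
    (hb : ∀ i j k, i ≠ j → j ≠ k → i ≠ k → T i j k = 0)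
    (hc : ∀ i s k, h i * T s s k = h s * T i i k) :
    ∀ i j, T i i i ≠ 0 → T j j j ≠ 0 → i = j := by
  intro i j hi hj
  obtain ⟨s, hs⟩ : ∃ s, h s ≠ 0 := by
    by_contra hcon
    push_neg at hcon
    exact hh (funext hcon)
  have key : ∀ k : Fin n, T k k k ≠ 0 → s = k := by
    intro k hk
    by_contra hne
    have h0 : T s s k = 0 := ha s k hne
    have := hc k s k
    rw [h0, mul_zero] at this
    exact hk (by
      have := (mul_eq_zero.mp this.symm).resolve_left hs
      exact this)
  rw [← key i hi, ← key j hj]
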